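/- Let m ≥ 1 and consider the SPN S over ι = Fin m with α i = Bool for all i, defined as the product of SPNs S_1, …, S_m, where each S_i is a Sum node over variable i with four leaf children and weights 5/16, 11/48, 11/48, 11/48: the first leaf is p with p(true) = 1, p(false) = 0, and each of the other three leaves is p with p(true) = 0, p(false) = 1. Then pd(S) = (5/16)^m and max over configurations x : Fin m → Bool of S(x) = (11/16)^m; consequently max_x S(x) > 2^m · pd(S). -/

import Mathlib

open scoped NNReal

/-- Sum-product networks over index set `ι` with variable domains `α i`, indexed by scope. -/
inductive SPN (ι : Type) (α : ι → Type) : Set ι → Type where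
  | leaf (i : ι) (p : α i → ℝ≥0) : SPN ι α {i}
  | sum {sc : Set ι} (t : ℕ) (ht : 1 ≤ t) (child : Fin t → SPN ι α sc)
      (w : Fin t → ℝ≥0) (hw : ∑ j, w j = 1) : SPN ι α sc
  | prod (t : ℕ) (scs : Fin t → Set ι)
      (hd : Pairwise fun j k => Disjoint (scs j) (scs k))
      (child : ∀ j, SPN ι α (scs j)) : SPN ι α (⋃ j, scs j)

/-- The value of an SPN at a configuration. -/
noncomputable def SPN.eval {ι : Type} {α : ι → Type} :
    {sc : Set ι} → SPN ι α sc → (∀ i, α i) → ℝ≥0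
  | _, .leaf i p, x => p (x i)
  | _, .sum _ _ child w _, x => ∑ j, w j * (child j).eval x
  | _, .prod _ _ _ child, x => ∏ j, (child j).eval x

/-- The upward pass of the max-product algorithm. -/
noncomputable def SPN.pd {ι : Type} {α : ι → Type} :
    {sc : Set ι} → SPN ι α sc → ℝ≥0
  | _, .leaf _ p => ⨆ v, p v
  | _, .sum _ _ child w _ => ⨆ j, w j * (child j).pd
  | _, .prod _ _ _ child => ∏ j, (child j).pd

/-- The product over all sum nodes of the number of their children. -/
def SPN.D {ι : Type} {α : ι → Type} :
    {sc : Set ι} → SPN ι α sc → ℕ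
  | _, .leaf _ _ => 1
  | _, .sum t _ child _ _ => t * ∏ j, (child j).D
  | _, .prod _ _ _ child => ∏ j, (child j).D

/-- The sum node `S_i` over variable `i` with four leaf children and weights
`5/16, 11/48, 11/48, 11/48`: the first leaf puts all mass on `true`, the other three
put all mass on `false`. -/
noncomputable def Si (m : ℕ) (i : Fin m) : SPN (Fin m) (fun _ => Bool) {i} :=
  .sum 4 (by norm_num)
    (fun j => if j = 0 then .leaf i (fun b => if b then 1 else 0)
              else .leaf i (fun b => if b then 0 else 1))
    (fun j => if j = 0 then 5 / 16 else 11 / 48)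
    (by simp [Fin.sum_univ_four]; rw [← NNReal.coe_inj]; push_cast; norm_num)

/-- The product of `S_1, …, S_m`. -/
noncomputable def Sbig (m : ℕ) : SPN (Fin m) (fun _ => Bool) (⋃ i, ({i} : Set (Fin m))) :=
  .prod m (fun i => {i}) (fun _ _ hjk => Set.disjoint_singleton.mpr hjk)
    (fun i => Si m i)

lemma Si_eval (m : ℕ) (i : Fin m) (x : Fin m → Bool) :
    (Si m i).eval x = if x i then (5/16 : ℝ≥0) else 11/16 := by
  simp [Si, SPN.eval, Fin.sum_univ_four]
  cases x i <;> simp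
  · rw [← NNReal.coe_inj]; push_cast; norm_num

lemma Si_pd (m : ℕ) (i : Fin m) : (Si m i).pd = (5/16 : ℝ≥0) := by
  simp only [Si, SPN.pd]
  have hl : ∀ (p : Bool → ℝ≥0), (SPN.leaf (ι := Fin m) (α := fun _ => Bool) i p).pd
      = ⨆ v, p v := fun p => rfl
  have key : ∀ j : Fin 4, (if j = 0 then (5/16 : ℝ≥0) else 11/48) *
      ((if j = 0 then SPN.leaf (ι := Fin m) (α := fun _ => Bool) i (fun b => if b then 1 else 0)
        else SPN.leaf i (fun b => if b then 0 else 1)).pd) = if j = 0 then 5/16 else 11/48 := by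
    intro j
    by_cases h : j = 0 <;> simp [h, hl]
    · rw [ciSup_eq_of_forall_le_of_forall_lt_exists_gt] <;> intro b
      · cases b <;> simp
      · intro hb; exact ⟨true, by simpa using hb⟩
    · rw [ciSup_eq_of_forall_le_of_forall_lt_exists_gt] <;> intro b
      · cases b <;> simp
      · intro hb; exact ⟨false, by simpa using hb⟩
  simp only [key]
  apply le_antisymm
  · apply ciSup_le; intro j
    split
    · exact le_rfl
    · rw [← NNReal.coe_le_coe]; push_cast; norm_num
  · have := le_ciSup (f := fun j : Fin 4 => if j = 0 then (5/16 : ℝ≥0) else 11/48)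
      (Set.Finite.bddAbove (Set.finite_range _)) 0
    simpa using this

/-- For the SPN `S = Π_i S_i` above, `pd(S) = (5/16)^m` and
`max_x S(x) = (11/16)^m`; consequently `max_x S(x) > 2^m · pd(S)`. -/
theorem stmt15 (m : ℕ) (hm : 1 ≤ m) :
    (Sbig m).pd = (5 / 16 : ℝ≥0) ^ m ∧
    (⨆ x : Fin m → Bool, (Sbig m).eval x) = (11 / 16 : ℝ≥0) ^ m ∧
    (2 : ℝ≥0) ^ m * (Sbig m).pd < ⨆ x : Fin m → Bool, (Sbig m).eval x := by
  have hpd : (Sbig m).pd = (5 / 16 : ℝ≥0) ^ m := by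
    show (∏ i : Fin m, (Si m i).pd) = _
    simp only [Si_pd, Finset.prod_const, Finset.card_univ, Fintype.card_fin]
  have heval : ∀ x : Fin m → Bool,
      (Sbig m).eval x = ∏ i : Fin m, (if x i then (5/16 : ℝ≥0) else 11/16) := by
    intro x
    show (∏ i : Fin m, (Si m i).eval x) = _
    simp [Si_eval]
  have hsup : (⨆ x : Fin m → Bool, (Sbig m).eval x) = (11 / 16 : ℝ≥0) ^ m := by
    apply le_antisymm
    · apply ciSup_le; intro x
      rw [heval]
      calc (∏ i : Fin m, (if x i then (5/16 : ℝ≥0) else 11/16))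
          ≤ ∏ i : Fin m, (11/16 : ℝ≥0) := by
            apply Finset.prod_le_prod (fun _ _ => zero_le)
            intro i _
            split
            · rw [← NNReal.coe_le_coe]; push_cast; norm_num
            · exact le_rfl
        _ = (11/16 : ℝ≥0) ^ m := by simp only [Finset.prod_const, Finset.card_univ, Fintype.card_fin]
    · have := le_ciSup (f := fun x : Fin m → Bool => (Sbig m).eval x)
        (Set.Finite.bddAbove (Set.finite_range _)) (fun _ => false)
      rw [heval] at this
      simpa [div_pow] using this
  refine ⟨hpd, hsup, ?_⟩
  rw [hpd, hsup, ← mul_pow]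
  apply pow_lt_pow_left₀ _ zero_le (Nat.one_le_iff_ne_zero.mp hm)
  rw [← NNReal.coe_lt_coe]; push_cast; norm_num
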